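/- Let n ≥ 2, a ∈ ℂ nonzero and B an invertible hermitian (n−1)×(n−1) complex matrix. Then W := { [[1,v,w],[0,I_{n−1},y],[0,0,1]] : w ∈ ℂ, v a row vector and y a column vector in ℂ^{n−1}, B·y + v†·a = 0, y†By + ā·w + a·w̄ = 0 } is a subgroup of GL(n+1,ℂ), and its centre is exactly { [[1,0,w],[0,I_{n−1},0],[0,0,1]] : w ∈ i·a·ℝ }, i.e. the elements with v = 0, y = 0 and w = i·a·x for some real x. -/

import Mathlib

/-!
STATEMENT 16.
`n ≥ 2`, `a ∈ ℂ` nonzero, `B` invertible hermitian `(n−1)×(n−1)`.  Then the set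
`W = { [[1,v,w],[0,I,y],[0,0,1]] : B·y + vᴴ·a = 0, yᴴBy + ā·w + a·w̄ = 0 }` is a
subgroup of `GL(n+1,ℂ)`, and its centre is exactly the set of such elements with
`v = 0`, `y = 0` and `w = i·a·x` for some real `x`.
-/

open Matrix Complex

set_option synthInstance.maxHeartbeats 800000
set_option maxHeartbeats 1000000
set_option linter.unusedSectionVars false

namespace Stmt16Aux

variable {m : Type*} [Fintype m] [DecidableEq m]

def Mfun (w : ℂ) (v y : m → ℂ) :
    Matrix (Fin 1 ⊕ (m ⊕ Fin 1)) (Fin 1 ⊕ (m ⊕ Fin 1)) ℂ :=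
  Matrix.of fun i j => Sum.elim (fun _ => Sum.elim (fun _ => 1) (Sum.elim v (fun _ => w)))
    (Sum.elim (fun i' => Sum.elim (fun _ => 0)
        (Sum.elim (fun j' => if i' = j' then 1 else 0) (fun _ => y i')))
      (fun _ => Sum.elim (fun _ => 0) (Sum.elim (fun _ => 0) (fun _ => 1)))) i j

lemma Mfun_mul (w1 w2 : ℂ) (v1 v2 y1 y2 : m → ℂ) :
    Mfun w1 v1 y1 * Mfun w2 v2 y2
      = Mfun (w1 + w2 + v1 ⬝ᵥ y2) (v1 + v2) (y1 + y2) := by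
  ext i j
  obtain (i | i | i) := i <;> obtain (j | j | j) := j <;>
    simp [Mfun, Matrix.mul_apply, Fintype.sum_sum_type, dotProduct,
      ite_mul, mul_ite, Finset.sum_ite_eq, Finset.sum_ite_eq'] <;>
    ring

lemma Mfun_one : (Mfun 0 0 0 : Matrix (Fin 1 ⊕ (m ⊕ Fin 1)) _ ℂ) = 1 := by
  ext i j
  obtain (i | i | i) := i <;> obtain (j | j | j) := j <;>
    simp [Mfun, Matrix.one_apply, eq_iff_true_of_subsingleton]

noncomputable def mkU (w : ℂ) (v y : m → ℂ) : GL (Fin 1 ⊕ (m ⊕ Fin 1)) ℂ :=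
  ⟨Mfun w v y, Mfun (-w + v ⬝ᵥ y) (-v) (-y),
    by rw [Mfun_mul, show w + (-w + v ⬝ᵥ y) + v ⬝ᵥ (-y) = 0 by
          rw [dotProduct_neg]; ring, add_neg_cancel, add_neg_cancel, Mfun_one],
    by rw [Mfun_mul, show (-w + v ⬝ᵥ y) + w + (-v) ⬝ᵥ y = 0 by
          rw [neg_dotProduct]; ring, neg_add_cancel, neg_add_cancel, Mfun_one]⟩

@[simp] lemma mkU_coe (w : ℂ) (v y : m → ℂ) :
    ((mkU w v y : GL (Fin 1 ⊕ (m ⊕ Fin 1)) ℂ) : Matrix _ _ ℂ) = Mfun w v y := rfl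

lemma keyL {B : Matrix m m ℂ} (hB : B.IsHermitian) {a : ℂ} {v1 y1 : m → ℂ}
    (h1 : B.mulVec y1 + a • star v1 = 0) (y2 : m → ℂ) :
    (starRingEnd ℂ) a * (v1 ⬝ᵥ y2) = -(star y1 ⬝ᵥ B.mulVec y2) := by
  have h2 : a • star v1 = -B.mulVec y1 := eq_neg_of_add_eq_zero_left (by linear_combination h1)
  have h3 := congrArg star h2
  rw [star_smul, star_star, star_neg, star_mulVec, hB.eq] at h3
  calc (starRingEnd ℂ) a * (v1 ⬝ᵥ y2) = ((starRingEnd ℂ) a • v1) ⬝ᵥ y2 := by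
        rw [smul_dotProduct]; rfl
    _ = (-(star y1 ᵥ* B)) ⬝ᵥ y2 := by rw [← h3]; rfl
    _ = -(star y1 ⬝ᵥ B.mulVec y2) := by rw [neg_dotProduct, dotProduct_mulVec]

lemma hermconj {B : Matrix m m ℂ} (hB : B.IsHermitian) (y1 y2 : m → ℂ) :
    (starRingEnd ℂ) (star y1 ⬝ᵥ B.mulVec y2) = star y2 ⬝ᵥ B.mulVec y1 := by
  rw [show ((starRingEnd ℂ) (star y1 ⬝ᵥ B.mulVec y2)) = star (star y1 ⬝ᵥ B.mulVec y2) from rfl]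
  rw [star_dotProduct, star_star, star_mulVec, hB.eq, dotProduct_mulVec]

def Wcar (a : ℂ) (B : Matrix m m ℂ) : Set (GL (Fin 1 ⊕ (m ⊕ Fin 1)) ℂ) :=
  {g | ∃ (w : ℂ) (v y : m → ℂ),
    (↑g : Matrix (Fin 1 ⊕ (m ⊕ Fin 1)) (Fin 1 ⊕ (m ⊕ Fin 1)) ℂ) = Mfun w v y ∧
    B.mulVec y + a • star v = 0 ∧
    star y ⬝ᵥ B.mulVec y + (starRingEnd ℂ) a * w + a * (starRingEnd ℂ) w = 0}

def Wgrp (a : ℂ) (B : Matrix m m ℂ) (hB : B.IsHermitian) :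
    Subgroup (GL (Fin 1 ⊕ (m ⊕ Fin 1)) ℂ) where
  carrier := Wcar a B
  one_mem' := ⟨0, 0, 0, by rw [Units.val_one, Mfun_one], by simp, by simp⟩
  mul_mem' := by
    rintro g h ⟨w1, v1, y1, hg, c11, c12⟩ ⟨w2, v2, y2, hh, c21, c22⟩
    refine ⟨w1 + w2 + v1 ⬝ᵥ y2, v1 + v2, y1 + y2,
      by rw [Units.val_mul, hg, hh, Mfun_mul], ?_, ?_⟩
    · simp only [mulVec_add, star_add, smul_add]
      linear_combination c11 + c21
    · have e3 := keyL hB c11 y2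
      have e4 := congrArg (starRingEnd ℂ) e3
      rw [_root_.map_mul, map_neg, Complex.conj_conj, hermconj hB] at e4
      simp only [star_add, mulVec_add, dotProduct_add, add_dotProduct, map_add]
      linear_combination c12 + c22 + e3 + e4
  inv_mem' := by
    rintro g ⟨w, v, y, hg, c1, c2⟩
    have h1 : (↑g : Matrix (Fin 1 ⊕ (m ⊕ Fin 1)) _ ℂ) * Mfun (-w + v ⬝ᵥ y) (-v) (-y) = 1 := by
      rw [hg, Mfun_mul, show w + (-w + v ⬝ᵥ y) + v ⬝ᵥ (-y) = 0 by
        rw [dotProduct_neg]; ring, add_neg_cancel, add_neg_cancel, Mfun_one]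
    refine ⟨-w + v ⬝ᵥ y, -v, -y, ?_, ?_, ?_⟩
    · calc (↑(g⁻¹) : Matrix (Fin 1 ⊕ (m ⊕ Fin 1)) _ ℂ)
          = ↑(g⁻¹) * ((↑g : Matrix _ _ ℂ) * Mfun (-w + v ⬝ᵥ y) (-v) (-y)) := by
            rw [h1, mul_one]
        _ = (↑(g⁻¹) * (↑g : Matrix _ _ ℂ)) * Mfun (-w + v ⬝ᵥ y) (-v) (-y) := by
            rw [mul_assoc]
        _ = Mfun (-w + v ⬝ᵥ y) (-v) (-y) := by
            rw [← Units.val_mul, inv_mul_cancel, Units.val_one, one_mul]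
    · simp only [mulVec_neg, star_neg, smul_neg, ← neg_add, neg_eq_zero]
      exact c1
    · have e3 := keyL hB c1 y
      have e4 := congrArg (starRingEnd ℂ) e3
      rw [_root_.map_mul, map_neg, Complex.conj_conj, hermconj hB] at e4
      simp only [star_neg, mulVec_neg, dotProduct_neg, neg_dotProduct, neg_neg, map_add,
        map_neg, mul_add, mul_neg]
      linear_combination e3 + e4 - c2

end Stmt16Aux

open Stmt16Aux in
theorem stmt16
    (n : ℕ) (hn : 2 ≤ n)
    (a : ℂ) (ha : a ≠ 0)
    (B : Matrix (Fin (n - 1)) (Fin (n - 1)) ℂ) (hB : B.IsHermitian) (hBdet : IsUnit B.det) :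
    ∃ Wgrp : Subgroup (GL (Fin 1 ⊕ (Fin (n - 1) ⊕ Fin 1)) ℂ),
      (∀ g : GL (Fin 1 ⊕ (Fin (n - 1) ⊕ Fin 1)) ℂ,
        g ∈ Wgrp ↔ ∃ (w : ℂ) (v y : Fin (n - 1) → ℂ),
          (g : Matrix (Fin 1 ⊕ (Fin (n - 1) ⊕ Fin 1)) (Fin 1 ⊕ (Fin (n - 1) ⊕ Fin 1)) ℂ) =
            (fun i j => match i, j with
              | Sum.inl _, Sum.inl _ => 1
              | Sum.inl _, Sum.inr (Sum.inl j') => v j'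
              | Sum.inl _, Sum.inr (Sum.inr _) => w
              | Sum.inr (Sum.inl i'), Sum.inr (Sum.inl j') => if i' = j' then 1 else 0
              | Sum.inr (Sum.inl i'), Sum.inr (Sum.inr _) => y i'
              | Sum.inr (Sum.inr _), Sum.inr (Sum.inr _) => 1
              | _, _ => 0) ∧
          B.mulVec y + a • star v = 0 ∧
          star y ⬝ᵥ B.mulVec y + (starRingEnd ℂ) a * w + a * (starRingEnd ℂ) w = 0) ∧
      (∀ g : Wgrp, g ∈ Subgroup.center Wgrp ↔ ∃ x : ℝ,
        ((g : GL (Fin 1 ⊕ (Fin (n - 1) ⊕ Fin 1)) ℂ) :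
            Matrix (Fin 1 ⊕ (Fin (n - 1) ⊕ Fin 1)) (Fin 1 ⊕ (Fin (n - 1) ⊕ Fin 1)) ℂ) =
          (fun i j => match i, j with
            | Sum.inl _, Sum.inl _ => 1
            | Sum.inl _, Sum.inr (Sum.inr _) => Complex.I * a * (x : ℂ)
            | Sum.inr (Sum.inl i'), Sum.inr (Sum.inl j') => if i' = j' then 1 else 0
            | Sum.inr (Sum.inr _), Sum.inr (Sum.inr _) => 1
            | _, _ => 0)) := by

  classical
  have hmem : ∀ u : GL (Fin 1 ⊕ (Fin (n - 1) ⊕ Fin 1)) ℂ,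
      u ∈ Wgrp a B hB ↔ u ∈ Wcar a B := fun _ => Iff.rfl
  refine ⟨Wgrp a B hB, ?_, fun g => ?_⟩
  · intro g
    refine (hmem g).trans ⟨?_, ?_⟩
    · rintro ⟨w, v, y, hmat, c1, c2⟩
      refine ⟨w, v, y, ?_, c1, c2⟩
      rw [hmat]; funext i j
      obtain (i | i | i) := i <;> obtain (j | j | j) := j <;> rfl
    · rintro ⟨w, v, y, hmat, c1, c2⟩
      refine ⟨w, v, y, ?_, c1, c2⟩
      rw [hmat]; funext i j
      obtain (i | i | i) := i <;> obtain (j | j | j) := j <;> rfl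
  constructor
  · intro hc
    obtain ⟨w1, v1, y1, hg, c1, c2⟩ := (hmem _).mp g.2
    have hcomm := Subgroup.mem_center_iff.mp hc
    have main : ∀ y2 : Fin (n - 1) → ℂ,
        star y1 ⬝ᵥ B.mulVec y2 = star y2 ⬝ᵥ B.mulVec y1 := by
      intro y2
      set v2 : Fin (n - 1) → ℂ := -(((starRingEnd ℂ) a)⁻¹) • star (B.mulVec y2) with hv2
      set w2 : ℂ := -(star y2 ⬝ᵥ B.mulVec y2) / (2 * (starRingEnd ℂ) a) with hw2
      have ha' : (starRingEnd ℂ) a ≠ 0 := by simpa using ha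
      have hc1 : B.mulVec y2 + a • star v2 = 0 := by
        rw [hv2, star_smul, star_star, smul_smul]
        rw [show star (-((starRingEnd ℂ) a)⁻¹) = -a⁻¹ by
          simp [Complex.star_def, map_inv₀]]
        rw [mul_neg, mul_inv_cancel₀ ha, neg_smul, one_smul, add_neg_cancel]
      have hr : (starRingEnd ℂ) (star y2 ⬝ᵥ B.mulVec y2) = star y2 ⬝ᵥ B.mulVec y2 :=
        hermconj hB y2 y2
      have hc2 : star y2 ⬝ᵥ B.mulVec y2 + (starRingEnd ℂ) a * w2
          + a * (starRingEnd ℂ) w2 = 0 := by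
        have hcw : (starRingEnd ℂ) w2 = -(star y2 ⬝ᵥ B.mulVec y2) / (2 * a) := by
          rw [hw2, map_div₀, map_neg, _root_.map_mul, Complex.conj_conj, map_ofNat, hr]
        rw [hcw, hw2]
        field_simp
        ring
      set h2 : ↥(Wgrp a B hB) := ⟨mkU w2 v2 y2, (hmem _).mpr ⟨w2, v2, y2, rfl, hc1, hc2⟩⟩
      have hcm := hcomm h2
      have hmat : ((h2 * g : ↥(Wgrp a B hB)) : GL (Fin 1 ⊕ (Fin (n - 1) ⊕ Fin 1)) ℂ).val
          = ((g * h2 : ↥(Wgrp a B hB)) : GL (Fin 1 ⊕ (Fin (n - 1) ⊕ Fin 1)) ℂ).val := by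
        rw [hcm]
      simp only [Subgroup.coe_mul, Units.val_mul] at hmat
      rw [hg, show ((h2 : GL (Fin 1 ⊕ (Fin (n - 1) ⊕ Fin 1)) ℂ) : Matrix _ _ ℂ)
          = Mfun w2 v2 y2 from rfl, Mfun_mul, Mfun_mul] at hmat
      have hscal : w2 + w1 + v2 ⬝ᵥ y1 = w1 + w2 + v1 ⬝ᵥ y2 :=
        congrFun (congrFun hmat (Sum.inl 0)) (Sum.inr (Sum.inr 0))
      have q : v1 ⬝ᵥ y2 = v2 ⬝ᵥ y1 := by linear_combination -hscal
      have e1 := keyL hB c1 y2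
      have e2 := keyL hB hc1 y1
      linear_combination e1 - e2 - (starRingEnd ℂ) a * q
    have hzero : ∀ y2 : Fin (n - 1) → ℂ, star y1 ⬝ᵥ B.mulVec y2 = 0 := by
      intro y2
      have h1 := main y2
      have h2 := main (Complex.I • y2)
      rw [mulVec_smul, dotProduct_smul, smul_eq_mul, star_smul, smul_dotProduct,
        smul_eq_mul, Complex.star_def, Complex.conj_I, ← h1] at h2
      have h3 : (2 * Complex.I) * (star y1 ⬝ᵥ B.mulVec y2) = 0 := by linear_combination h2
      rcases mul_eq_zero.mp h3 with h4 | h4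
      · exact absurd h4 (by simp [Complex.I_ne_zero])
      · exact h4
    have h0 := hzero (B⁻¹.mulVec y1)
    rw [mulVec_mulVec, Matrix.mul_nonsing_inv B hBdet, one_mulVec] at h0
    have h0' : (↑(∑ i, Complex.normSq (y1 i)) : ℂ) = 0 := by
      rw [← h0]
      simp only [dotProduct, Pi.star_apply]
      push_cast
      exact (Finset.sum_congr rfl fun i _ => by
        rw [Complex.normSq_eq_conj_mul_self]; rfl).symm
    have hsum : ∑ i, Complex.normSq (y1 i) = 0 := by exact_mod_cast h0'
    have hy1 : y1 = 0 := funext fun i => by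
      have h5 := (Finset.sum_eq_zero_iff_of_nonneg
        (fun i _ => Complex.normSq_nonneg (y1 i))).mp hsum i (Finset.mem_univ i)
      simpa using Complex.normSq_eq_zero.mp h5
    have hv1 : v1 = 0 := by
      rw [hy1] at c1
      simpa [ha, star_eq_zero] using c1
    have hw : (starRingEnd ℂ) a * w1 + a * (starRingEnd ℂ) w1 = 0 := by
      rw [hy1] at c2
      simpa using c2
    have hzre : ((starRingEnd ℂ) a * w1).re = 0 := by
      have h' := congrArg Complex.re hw
      rw [show a * (starRingEnd ℂ) w1 = (starRingEnd ℂ) ((starRingEnd ℂ) a * w1) by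
        rw [_root_.map_mul, Complex.conj_conj]] at h'
      simp only [Complex.add_re, Complex.conj_re, Complex.zero_re] at h'
      linarith
    refine ⟨((starRingEnd ℂ) a * w1).im / Complex.normSq a, ?_⟩
    have ha' : (starRingEnd ℂ) a ≠ 0 := by simpa using ha
    have hkey : (starRingEnd ℂ) a * w1
        = (((((starRingEnd ℂ) a * w1).im : ℝ)) : ℂ) * Complex.I := by
      conv_lhs => rw [← Complex.re_add_im ((starRingEnd ℂ) a * w1)]
      rw [hzre]
      simp
    have hns : ((Complex.normSq a : ℝ) : ℂ) = (starRingEnd ℂ) a * a := by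
      rw [mul_comm, Complex.mul_conj]
    have hw1 : w1 = Complex.I * a * ((((starRingEnd ℂ) a * w1).im / Complex.normSq a : ℝ) : ℂ) := by
      have h6 : w1 * ((starRingEnd ℂ) a * a) = Complex.I * a * (((starRingEnd ℂ) a * w1).im : ℂ) := by
        linear_combination a * hkey
      rw [Complex.ofReal_div, hns, ← mul_div_assoc, eq_div_iff (mul_ne_zero ha' ha)]
      linear_combination h6
    rw [hy1, hv1, hw1] at hg
    rw [hg]
    funext i j
    obtain (i | i | i) := i <;> obtain (j | j | j) := j <;> rfl
  · rintro ⟨x, hx⟩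
    have hx' : ((g : GL (Fin 1 ⊕ (Fin (n - 1) ⊕ Fin 1)) ℂ) :
          Matrix (Fin 1 ⊕ (Fin (n - 1) ⊕ Fin 1)) (Fin 1 ⊕ (Fin (n - 1) ⊕ Fin 1)) ℂ)
        = Mfun (Complex.I * a * (x : ℂ)) 0 0 := by
      rw [hx]
      funext i j
      obtain (i | i | i) := i <;> obtain (j | j | j) := j <;> rfl
    apply Subgroup.mem_center_iff.mpr
    intro h
    obtain ⟨w2, v2, y2, hh, -, -⟩ := (hmem _).mp h.2
    refine Subtype.ext (Units.ext ?_)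
    show ((h : GL (Fin 1 ⊕ (Fin (n - 1) ⊕ Fin 1)) ℂ) :
          Matrix (Fin 1 ⊕ (Fin (n - 1) ⊕ Fin 1)) (Fin 1 ⊕ (Fin (n - 1) ⊕ Fin 1)) ℂ)
        * ((g : GL (Fin 1 ⊕ (Fin (n - 1) ⊕ Fin 1)) ℂ) :
          Matrix (Fin 1 ⊕ (Fin (n - 1) ⊕ Fin 1)) (Fin 1 ⊕ (Fin (n - 1) ⊕ Fin 1)) ℂ)
      = ((g : GL (Fin 1 ⊕ (Fin (n - 1) ⊕ Fin 1)) ℂ) :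
          Matrix (Fin 1 ⊕ (Fin (n - 1) ⊕ Fin 1)) (Fin 1 ⊕ (Fin (n - 1) ⊕ Fin 1)) ℂ)
        * ((h : GL (Fin 1 ⊕ (Fin (n - 1) ⊕ Fin 1)) ℂ) :
          Matrix (Fin 1 ⊕ (Fin (n - 1) ⊕ Fin 1)) (Fin 1 ⊕ (Fin (n - 1) ⊕ Fin 1)) ℂ)
    rw [hh, hx', Mfun_mul, Mfun_mul]
    simp only [dotProduct_zero, zero_dotProduct, add_zero, zero_add]
    rw [add_comm w2]
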